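/- In the coupling between the DaC model on Γ_D and inhomogeneous Bernoulli site percolation X on the rooted tree T_3 (where X(ρ) is the color of the root's copy and X(v) = 1 iff the pivotality event E_ṽ occurs in the copy D_ṽ), for every vertex v ≠ ρ of T_3, the copies of ρ and v in Γ_D are connected by a black path if and only if ρ and v are connected by a path of vertices with X-value 1 in T_3. -/

import Mathlib

open MeasureTheory Filter Set

attribute [local instance] Classical.propDecidable

structure Multigraph where
  V : Type
  E : Type
  ends : E → V × V

namespace Multigraph
variable (G : Multigraph)

/-- The edge `e` is incident to the vertex `v`. -/
def Inc (e : G.E) (v : G.V) : Prop := (G.ends e).1 = v ∨ (G.ends e).2 = v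

/-- The degree of a vertex: number of incident edges, counted with multiplicity. -/
noncomputable def degree (v : G.V) : ℕ := Nat.card {e : G.E // G.Inc e v}

/-- Adjacency of vertices. -/
def Adj (x y : G.V) : Prop := ∃ e, G.ends e = (x, y) ∨ G.ends e = (y, x)

/-- Connectivity through open edges of the bond configuration `η`. -/
def OpenConn (η : G.E → Bool) : G.V → G.V → Prop :=
  Relation.ReflTransGen (fun x y => ∃ e, η e = true ∧ (G.ends e = (x, y) ∨ G.ends e = (y, x)))

/-- The (vertex set of the) bond cluster of `v`. -/
def cluster (η : G.E → Bool) (v : G.V) : Set G.V := {w | G.OpenConn η v w}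

/-- `x` and `y` lie in the same black cluster of the site configuration `ξ`. -/
def BlackConn (ξ : G.V → Bool) (x y : G.V) : Prop :=
  ξ x = true ∧ Relation.ReflTransGen (fun u w => G.Adj u w ∧ ξ w = true) x y

/-- The event that some black cluster is infinite. -/
def InfiniteBlack : Set (G.V → Bool) := {ξ | ∃ v, {w | G.BlackConn ξ v w}.Infinite}

/-- The minimal vertex (w.r.t. the enumeration `idx`) of the bond cluster of `v`. -/
noncomputable def rep (idx : G.V → ℕ) (η : G.E → Bool) (v : G.V) : G.V :=
  haveI : Nonempty G.V := ⟨v⟩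
  Function.invFun idx (sInf (idx '' G.cluster η v))

/-- The site configuration obtained by giving each bond cluster the color of
its minimal vertex. -/
noncomputable def color (idx : G.V → ℕ) (η : G.E → Bool) (κ : G.V → Bool) : G.V → Bool :=
  fun v => κ (G.rep idx η v)

end Multigraph

/-- `ν` is the Bernoulli(`p`) product measure on `S → Bool`. -/
def IsBernoulli {S : Type} (p : ℝ) (ν : Measure (S → Bool)) : Prop :=
  IsProbabilityMeasure ν ∧ ∀ (s : Finset S) (f : S → Bool),
    ν {ω | ∀ i ∈ s, ω i = f i} = ∏ i ∈ s, ENNReal.ofReal (if f i then p else 1 - p)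

/-- `μ p r` is the divide-and-color measure built from the Bernoulli bond measures
`νE p` and the Bernoulli coloring measures `νV r`, clusters being colored by the
color of their `idx`-minimal vertex. -/
def IsDaC (G : Multigraph) (idx : G.V → ℕ)
    (νE : ℝ → Measure (G.E → Bool)) (νV : ℝ → Measure (G.V → Bool))
    (μ : ℝ → ℝ → Measure (G.V → Bool)) : Prop :=
  (∀ p ∈ Set.Icc (0:ℝ) 1, IsBernoulli p (νE p)) ∧
  (∀ r ∈ Set.Icc (0:ℝ) 1, IsBernoulli r (νV r)) ∧
  (∀ p r, μ p r = ((νE p).prod (νV r)).map (fun ω => G.color idx ω.1 ω.2))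

/-- `rc` is the critical coloring value function of the family of measures `μ`. -/
def IsCriticalColoring (G : Multigraph) (μ : ℝ → ℝ → Measure (G.V → Bool)) (rc : ℝ → ℝ) : Prop :=
  ∀ p ∈ Set.Icc (0:ℝ) 1, rc p ∈ Set.Icc (0:ℝ) 1 ∧
    (∀ r ∈ Set.Icc (0:ℝ) 1, r < rc p → μ p r G.InfiniteBlack = 0) ∧
    (∀ r ∈ Set.Icc (0:ℝ) 1, rc p < r → 0 < μ p r G.InfiniteBlack)

/-- `pc` is the critical point of Bernoulli bond percolation `νE`. -/
def IsBondCritical (G : Multigraph) (νE : ℝ → Measure (G.E → Bool)) (pc : ℝ) : Prop :=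
  pc ∈ Set.Icc (0:ℝ) 1 ∧
  ∀ p ∈ Set.Icc (0:ℝ) 1,
    (p < pc → νE p {η | ∃ v, (G.cluster η v).Infinite} = 0) ∧
    (pc < p → 0 < νE p {η | ∃ v, (G.cluster η v).Infinite})

/-- Probability of the event `A` under Bernoulli(`p`) bond percolation on a finite
edge set. -/
noncomputable def bprob {E : Type} [Fintype E] [DecidableEq E] (p : ℝ) (A : Set (E → Bool)) : ℝ :=
  ∑ η : E → Bool, if η ∈ A then ∏ e : E, (if η e then p else 1 - p) else 0

namespace Multigraph

/-- The minimal vertex of the bond cluster of `v` (finite graphs). -/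
noncomputable def minRep (D : Multigraph) [Fintype D.V] [LinearOrder D.V]
    (η : D.E → Bool) (v : D.V) : D.V :=
  ((Set.toFinite (D.cluster η v)).toFinset).min'
    (by rw [Set.Finite.toFinset_nonempty]; exact ⟨v, Relation.ReflTransGen.refl⟩)

/-- Probability of an event `A` (depending on the bond configuration and the induced
coloring) in the divide-and-color model on a finite graph `D`. -/
noncomputable def dacProb (D : Multigraph) [Fintype D.E] [DecidableEq D.E]
    [Fintype D.V] [LinearOrder D.V] (p r : ℝ)
    (A : Set ((D.E → Bool) × (D.V → Bool))) : ℝ :=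
  ∑ η : D.E → Bool, ∑ κ : D.V → Bool,
    ((∏ e : D.E, if η e then p else 1 - p) * (∏ v : D.V, if κ v then r else 1 - r)) *
      (if (η, fun v => κ (D.minRep η v)) ∈ A then 1 else 0)

/-- The event `E_{a,b}`: the bond cluster of `a` is pivotal for the existence of a
black path from `a` to `b`; that is, either `a` and `b` are in the same bond cluster,
or they are in different bond clusters but some vertex at distance 1 from the cluster
of `a` is connected to `b` by a black path. -/
def PivEvent (D : Multigraph) (a b : D.V) : Set ((D.E → Bool) × (D.V → Bool)) :=
  {ω | D.OpenConn ω.1 a b ∨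
    (¬ D.OpenConn ω.1 a b ∧ ∃ v, v ∉ D.cluster ω.1 a ∧
      (∃ u ∈ D.cluster ω.1 a, D.Adj u v) ∧ D.BlackConn ω.2 v b)}

/-- `h^D(p)`: probability that `a` and `b` are in the same bond cluster. -/
noncomputable def hprob (D : Multigraph) [Fintype D.E] [DecidableEq D.E]
    (a b : D.V) (p : ℝ) : ℝ :=
  bprob p {η | D.OpenConn η a b}

/-- `f^D(p,r)`: DaC probability of the pivotality event `E_{a,b}`. -/
noncomputable def fprob (D : Multigraph) [Fintype D.E] [DecidableEq D.E]
    [Fintype D.V] [LinearOrder D.V] (a b : D.V) (p r : ℝ) : ℝ :=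
  D.dacProb p r (D.PivEvent a b)

end Multigraph

/-! ### The rooted 3-regular tree and the tree-like substitution construction -/

/-- Vertices of the rooted 3-regular tree `T₃`: the root is `none`; any other
vertex is reached by first choosing one of the 3 subtrees of the root and then
following a binary path. -/
abbrev V3 : Type := Option (Fin 3 × List (Fin 2))

/-- Edges of `T₃`, indexed by their endpoint `s e` farther from the root. -/
abbrev E3 : Type := Fin 3 × List (Fin 2)

/-- The level of the edge `e`, i.e. the distance from `s e` to the root. -/
def levelE (e : E3) : ℕ := e.2.length + 1

/-- The endpoint of the edge `e` closer to the root (`f(e)`). -/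
def parentV (e : E3) : V3 := if e.2 = [] then none else some (e.1, e.2.dropLast)

/-- Adjacency in the tree `T₃`. -/
def T3Adj (x y : V3) : Prop :=
  ∃ e : E3, (x = parentV e ∧ y = some e) ∨ (y = parentV e ∧ x = some e)

/-- The vertices of `D` other than the two marked ones. -/
def interiorV (D : Multigraph) (a b : D.V) : Type := {v : D.V // v ≠ a ∧ v ≠ b}

/-- Embedding of the vertex set of the copy of `D (levelE e)` replacing the tree
edge `e` into the vertex set of the tree-like graph `Γ_D`: the marked vertex `a`
goes to the endpoint of `e` closer to the root, `b` to the farther endpoint, and the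
other vertices to fresh interior vertices. -/
noncomputable def embedV (D : ℕ → Multigraph) (a b : ∀ n, (D n).V) (e : E3)
    (v : (D (levelE e)).V) :
    V3 ⊕ Σ e' : E3, interiorV (D (levelE e')) (a (levelE e')) (b (levelE e')) :=
  if h : v = a (levelE e) then Sum.inl (parentV e)
  else if h' : v = b (levelE e) then Sum.inl (some e)
  else Sum.inr ⟨e, ⟨v, h, h'⟩⟩

/-- The tree-like graph `Γ_D` obtained from the rooted 3-regular tree by replacing
every edge at level `n` by a copy of `D n`, the endpoint nearer the root being
identified with `a n` and the other one with `b n`. -/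
@[reducible] noncomputable def GammaD (D : ℕ → Multigraph) (a b : ∀ n, (D n).V) : Multigraph where
  V := V3 ⊕ Σ e : E3, interiorV (D (levelE e)) (a (levelE e)) (b (levelE e))
  E := Σ e : E3, (D (levelE e)).E
  ends := fun ed =>
    (embedV D a b ed.1 ((D (levelE ed.1)).ends ed.2).1,
     embedV D a b ed.1 ((D (levelE ed.1)).ends ed.2).2)

/-- The copy of the root `ρ` in `Γ_D`. -/
noncomputable def rootV (D : ℕ → Multigraph) (a b : ∀ n, (D n).V) : (GammaD D a b).V :=
  Sum.inl none


/-- The site variable `X` on the tree `T₃` induced by a DaC configuration `(η, ξ)` on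
`Γ_D`: at the root it records the color of the root copy, and at a vertex `v ≠ ρ` it
records the occurrence of the pivotality event in the copy `D_ṽ`. -/
noncomputable def treeSiteBlack (D : ℕ → Multigraph) (a b : ∀ n, (D n).V)
    (η : (GammaD D a b).E → Bool) (ξ : (GammaD D a b).V → Bool) : V3 → Prop
  | none => ξ (Sum.inl none) = true
  | some e =>
      ((fun ed => η ⟨e, ed⟩, fun w => ξ (embedV D a b e w)) :
          ((D (levelE e)).E → Bool) × ((D (levelE e)).V → Bool)) ∈
        Multigraph.PivEvent (D (levelE e)) (a (levelE e)) (b (levelE e))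

/-! ### Auxiliary lemmas for the coupling proof -/

section Aux

/-- Generic first-entry decomposition of a reflexive-transitive walk into a set. -/
lemma aux_firstEntry {α : Type*} {R : α → α → Prop} {S : Set α} :
    ∀ {x y : α}, Relation.ReflTransGen R x y → x ∉ S → y ∈ S →
      ∃ u w, u ∉ S ∧ w ∈ S ∧ Relation.ReflTransGen R x u ∧ R u w ∧
        Relation.ReflTransGen R w y := by
  intro x y h
  induction h using Relation.ReflTransGen.head_induction_on with
  | refl => intro hx hy; exact absurd hy hx
  | @head x' c hst rest ih =>
    intro hx hy
    by_cases hc : c ∈ S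
    · exact ⟨x', c, hx, hc, .refl, hst, rest⟩
    · obtain ⟨u, w, hu, hw, h1, h2, h3⟩ := ih hc hy
      exact ⟨u, w, hu, hw, h1.head hst, h2, h3⟩

/-- Along a walk whose steps demand the target be `true`, the final point is `true`
provided the start is. -/
lemma aux_lastTrue {α : Type*} {Adj' : α → α → Prop} {f : α → Bool} :
    ∀ {x y : α}, Relation.ReflTransGen (fun u w => Adj' u w ∧ f w = true) x y →
      f x = true → f y = true := by
  intro x y h hx
  induction h with
  | refl => exact hx
  | tail _ hst ih => exact hst.2

lemma aux_prefix_dropLast {α : Type*} {l₁ l₂ : List α} (h : l₁ <+: l₂) (hne : l₁ ≠ l₂) :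
    l₁ <+: l₂.dropLast := by
  obtain ⟨t, rfl⟩ := h
  rcases eq_or_ne t [] with rfl | ht
  · simp at hne
  · rw [List.dropLast_append_of_ne_nil ht]
    exact ⟨t.dropLast, rfl⟩

lemma Multigraph.BlackConn.trans' {G : Multigraph} {ξ : G.V → Bool} {x y z : G.V}
    (h1 : G.BlackConn ξ x y) (h2 : G.BlackConn ξ y z) : G.BlackConn ξ x z :=
  ⟨h1.1, h1.2.trans h2.2⟩

/-- Descendance of edges in `T₃`. -/
def desc (e e' : E3) : Prop := e'.1 = e.1 ∧ e.2 <+: e'.2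

lemma desc_refl (e : E3) : desc e e := ⟨rfl, List.prefix_refl _⟩

lemma desc_trans {e e' e'' : E3} (h : desc e e') (h' : desc e' e'') : desc e e'' :=
  ⟨h'.1.trans h.1, h.2.trans h'.2⟩

lemma parentV_of_ne_nil {e : E3} (h : e.2 ≠ []) :
    parentV e = some (e.1, e.2.dropLast) := by simp [parentV, h]

lemma parentV_of_nil {e : E3} (h : e.2 = []) : parentV e = none := by simp [parentV, h]

/-- `desc` to the parent edge characterisation. -/
lemma desc_parent_iff {e₀ e : E3} (h : e.2 ≠ []) :
    desc e₀ (e.1, e.2.dropLast) ↔ desc e₀ e ∧ e₀ ≠ e := by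
  constructor
  · rintro ⟨h1, h2⟩
    refine ⟨⟨h1, h2.trans (List.dropLast_prefix _)⟩, ?_⟩
    rintro rfl
    have := h2.length_le
    rw [List.length_dropLast] at this
    have hpos := List.length_pos_iff.mpr h
    omega
  · rintro ⟨⟨h1, h2⟩, hne⟩
    refine ⟨h1, aux_prefix_dropLast h2 ?_⟩
    intro heq
    exact hne (Prod.ext h1.symm heq)

end Aux

section Gamma

variable {D : ℕ → Multigraph} {a b : ∀ n, (D n).V}

lemma embed_a (e : E3) : embedV D a b e (a (levelE e)) = Sum.inl (parentV e) := by
  simp [embedV]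

lemma embed_b (hab : ∀ n, a n ≠ b n) (e : E3) :
    embedV D a b e (b (levelE e)) = Sum.inl (some e) := by
  simp [embedV, (hab (levelE e)).symm]

lemma embed_nab {e : E3} {v : (D (levelE e)).V} (h1 : v ≠ a (levelE e))
    (h2 : v ≠ b (levelE e)) : embedV D a b e v = Sum.inr ⟨e, ⟨v, h1, h2⟩⟩ := by
  simp [embedV, h1, h2]

/-- Every adjacency in `Γ_D` arises from an adjacency in a single copy. -/
lemma adj_cases {u w : (GammaD D a b).V} (h : (GammaD D a b).Adj u w) :
    ∃ (e : E3) (x y : (D (levelE e)).V), (D (levelE e)).Adj x y ∧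
      u = embedV D a b e x ∧ w = embedV D a b e y := by
  obtain ⟨⟨e, ε⟩, hends⟩ := h
  rcases hends with hends | hends
  · exact ⟨e, ((D (levelE e)).ends ε).1, ((D (levelE e)).ends ε).2,
      ⟨ε, Or.inl rfl⟩, (congrArg Prod.fst hends).symm, (congrArg Prod.snd hends).symm⟩
  · exact ⟨e, ((D (levelE e)).ends ε).2, ((D (levelE e)).ends ε).1,
      ⟨ε, Or.inr rfl⟩, (congrArg Prod.snd hends).symm, (congrArg Prod.fst hends).symm⟩

lemma local_adj_global {e : E3} {x y : (D (levelE e)).V} (h : (D (levelE e)).Adj x y) :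
    (GammaD D a b).Adj (embedV D a b e x) (embedV D a b e y) := by
  obtain ⟨ε, hε | hε⟩ := h
  · exact ⟨⟨e, ε⟩, Or.inl (by show (embedV D a b e _, embedV D a b e _) = _; rw [hε])⟩
  · exact ⟨⟨e, ε⟩, Or.inr (by show (embedV D a b e _, embedV D a b e _) = _; rw [hε])⟩

/-- The set of vertices of `Γ_D` strictly below the near endpoint of the tree edge `e`. -/
def BelowV (D : ℕ → Multigraph) (a b : ∀ n, (D n).V) (e : E3) : Set (GammaD D a b).V :=
  {w | ∃ e' : E3, desc e e' ∧ (w = Sum.inl (some e') ∨ ∃ v, w = Sum.inr ⟨e', v⟩)}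

lemma root_not_below (e : E3) : (Sum.inl none : (GammaD D a b).V) ∉ BelowV D a b e := by
  rintro ⟨e', _, h | ⟨v, h⟩⟩ <;> simp at h

lemma inl_some_below {e e' : E3} :
    (Sum.inl (some e') : (GammaD D a b).V) ∈ BelowV D a b e ↔ desc e e' := by
  constructor
  · rintro ⟨e'', hd, h | ⟨v, h⟩⟩
    · obtain rfl : e' = e'' := by simpa using h
      exact hd
    · simp at h
  · intro hd; exact ⟨e', hd, Or.inl rfl⟩

lemma inr_below {e e' : E3} {v} :
    (Sum.inr ⟨e', v⟩ : (GammaD D a b).V) ∈ BelowV D a b e ↔ desc e e' := by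
  constructor
  · rintro ⟨e'', hd, h | ⟨v', h⟩⟩
    · simp at h
    · simp only [Sum.inr.injEq] at h
      obtain ⟨rfl, -⟩ := Sigma.mk.inj_iff.mp h
      exact hd
  · intro hd; exact ⟨e', hd, Or.inr ⟨v, rfl⟩⟩

lemma inl_parent_below {e e' : E3} :
    (Sum.inl (parentV e') : (GammaD D a b).V) ∈ BelowV D a b e ↔ (desc e e' ∧ e ≠ e') := by
  rcases eq_or_ne e'.2 [] with hnil | hnil
  · rw [parentV_of_nil hnil]
    simp only [iff_false_intro (root_not_below e), false_iff]
    rintro ⟨⟨h1, h2⟩, hne⟩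
    rw [hnil] at h2
    have : e.2 = [] := List.prefix_nil.mp h2
    exact hne (Prod.ext h1.symm (this.trans hnil.symm))
  · rw [parentV_of_ne_nil hnil, inl_some_below]
    exact desc_parent_iff hnil

lemma embed_mem_below (hab : ∀ n, a n ≠ b n) {e₀ e : E3} {x : (D (levelE e)).V} :
    embedV D a b e x ∈ BelowV D a b e₀ ↔
      ((x = a (levelE e) ∧ desc e₀ e ∧ e₀ ≠ e) ∨ (x ≠ a (levelE e) ∧ desc e₀ e)) := by
  by_cases hx : x = a (levelE e)
  · subst hx
    rw [embed_a, inl_parent_below]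
    simp [and_comm]
  · by_cases hx' : x = b (levelE e)
    · subst hx'
      rw [embed_b hab, inl_some_below]
      simp [hx, (hab (levelE e)).symm]
    · have := inr_below (D := D) (a := a) (b := b) (e := e₀) (e' := e) (v := ⟨x, hx, hx'⟩)
      rw [embed_nab hx hx']
      exact this.trans (by simp [hx])

end Gamma

section Copy

variable {D : ℕ → Multigraph} {a b : ∀ n, (D n).V}

/-- The local bond configuration in the copy `D_e`. -/
noncomputable def etaLoc (η : (GammaD D a b).E → Bool) (e : E3) : (D (levelE e)).E → Bool :=
  fun ed => η ⟨e, ed⟩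

/-- The local site configuration in the copy `D_e`. -/
noncomputable def xiLoc (ξ : (GammaD D a b).V → Bool) (e : E3) : (D (levelE e)).V → Bool :=
  fun w => ξ (embedV D a b e w)

variable {η : (GammaD D a b).E → Bool} {ξ : (GammaD D a b).V → Bool}

lemma local_open_global {e : E3} {x y : (D (levelE e)).V}
    (h : (D (levelE e)).OpenConn (etaLoc η e) x y) :
    (GammaD D a b).OpenConn η (embedV D a b e x) (embedV D a b e y) := by
  refine Relation.ReflTransGen.lift (embedV D a b e) ?_ _ _ h
  rintro u w ⟨ε, hη, hends | hends⟩
  · exact ⟨⟨e, ε⟩, hη, Or.inl (by show (embedV D a b e _, embedV D a b e _) = _; rw [hends])⟩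
  · exact ⟨⟨e, ε⟩, hη, Or.inr (by show (embedV D a b e _, embedV D a b e _) = _; rw [hends])⟩

lemma local_black_global {e : E3} {x y : (D (levelE e)).V}
    (h : (D (levelE e)).BlackConn (xiLoc ξ e) x y) :
    (GammaD D a b).BlackConn ξ (embedV D a b e x) (embedV D a b e y) :=
  ⟨h.1, Relation.ReflTransGen.lift (embedV D a b e)
    (by intro _ _ hr; exact ⟨local_adj_global hr.1, hr.2⟩) _ _ h.2⟩

lemma xiLoc_a {e : E3} (hA : ξ (Sum.inl (parentV e)) = true) :
    xiLoc ξ e (a (levelE e)) = true := by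
  show ξ (embedV D a b e (a (levelE e))) = true
  rw [embed_a]; exact hA

lemma open_black (hξ : ∀ x y : (GammaD D a b).V, (GammaD D a b).OpenConn η x y → ξ x = ξ y)
    {e : E3} (hA : ξ (Sum.inl (parentV e)) = true) :
    ∀ {z}, (D (levelE e)).OpenConn (etaLoc η e) (a (levelE e)) z →
      (D (levelE e)).BlackConn (xiLoc ξ e) (a (levelE e)) z := by
  intro z h
  induction h with
  | refl => exact ⟨xiLoc_a hA, .refl⟩
  | @tail c z h' hst ih =>
    refine ⟨xiLoc_a hA, ih.2.tail ⟨?_, ?_⟩⟩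
    · obtain ⟨ε, _, hor⟩ := hst; exact ⟨ε, hor⟩
    · have hg := hξ _ _ (local_open_global (h'.tail hst))
      show ξ (embedV D a b e z) = true
      rw [← hg, embed_a]; exact hA

lemma piv_to_black (hξ : ∀ x y : (GammaD D a b).V, (GammaD D a b).OpenConn η x y → ξ x = ξ y)
    {e : E3} (hA : ξ (Sum.inl (parentV e)) = true)
    (hE : treeSiteBlack D a b η ξ (some e)) :
    (D (levelE e)).BlackConn (xiLoc ξ e) (a (levelE e)) (b (levelE e)) := by
  simp only [treeSiteBlack, Multigraph.PivEvent, Set.mem_setOf_eq] at hE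
  rcases hE with hopen | ⟨-, v, hv, ⟨u, hu, hadj⟩, hBC⟩
  · exact open_black hξ hA hopen
  · have h1 := open_black hξ hA hu
    exact ⟨xiLoc_a hA, (h1.2.tail ⟨hadj, hBC.1⟩).trans hBC.2⟩

lemma black_to_piv {e : E3}
    (hG : (D (levelE e)).BlackConn (xiLoc ξ e) (a (levelE e)) (b (levelE e))) :
    treeSiteBlack D a b η ξ (some e) := by
  simp only [treeSiteBlack, Multigraph.PivEvent, Set.mem_setOf_eq]
  by_cases hopen : (D (levelE e)).OpenConn (etaLoc η e) (a (levelE e)) (b (levelE e))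
  · exact Or.inl hopen
  · refine Or.inr ⟨hopen, ?_⟩
    obtain ⟨u, w, hu, hw, -, hst, hrest⟩ :=
      aux_firstEntry (S := {z | ¬ (D (levelE e)).OpenConn (etaLoc η e) (a (levelE e)) z})
        hG.2 (fun h => h Relation.ReflTransGen.refl) hopen
    exact ⟨w, hw, ⟨u, not_not.mp hu, hst.1⟩, hst.2, hrest⟩

lemma claimL (hab : ∀ n, a n ≠ b n) {e : E3} (hA : ξ (Sum.inl (parentV e)) = true) :
    ∀ w, Relation.ReflTransGen (fun u w => (GammaD D a b).Adj u w ∧ ξ w = true) w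
        (Sum.inl (some e)) →
      ((w ∉ BelowV D a b e) ∨ ∃ (x : (D (levelE e)).V) (h1 : x ≠ a (levelE e))
          (h2 : x ≠ b (levelE e)), w = Sum.inr ⟨e, ⟨x, h1, h2⟩⟩ ∧
          (D (levelE e)).BlackConn (xiLoc ξ e) (a (levelE e)) x) →
      (D (levelE e)).BlackConn (xiLoc ξ e) (a (levelE e)) (b (levelE e)) := by
  intro w hwalk
  induction hwalk using Relation.ReflTransGen.head_induction_on with
  | refl =>
    rintro (hout | ⟨x, h1, h2, heq, -⟩)
    · exact absurd ⟨e, desc_refl e, Or.inl rfl⟩ hout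
    · exact absurd heq (by simp)
  | @head w w' hst rest ih =>
    rintro (hout | ⟨x₀, h1, h2, heq, hBC⟩)
    · by_cases hw' : w' ∈ BelowV D a b e
      · obtain ⟨e₂, x, y, hxy, hwx, hwy⟩ := adj_cases hst.1
        rw [hwy] at hw'
        have hmem := (embed_mem_below hab).mp hw'
        have hdesc : desc e e₂ := by rcases hmem with ⟨_, hd, _⟩ | ⟨_, hd⟩ <;> exact hd
        rw [hwx] at hout
        have hxa : x = a (levelE e₂) := by
          by_contra hne
          exact hout ((embed_mem_below hab).mpr (Or.inr ⟨hne, hdesc⟩))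
        have hee : e = e₂ := by
          by_contra hne
          exact hout ((embed_mem_below hab).mpr (Or.inl ⟨hxa, hdesc, hne⟩))
        subst hee
        subst hxa
        have hya : y ≠ a (levelE e) := by
          rintro rfl
          rcases hmem with ⟨-, -, hne⟩ | ⟨hna, -⟩
          · exact hne rfl
          · exact hna rfl
        by_cases hyb : y = b (levelE e)
        · subst hyb
          exact ⟨xiLoc_a hA, .single ⟨hxy,
            show ξ (embedV D a b e _) = true by rw [← hwy]; exact hst.2⟩⟩
        · refine ih (Or.inr ⟨y, hya, hyb, by rw [hwy, embed_nab hya hyb], ?_⟩)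
          exact ⟨xiLoc_a hA, .single ⟨hxy,
            show ξ (embedV D a b e y) = true by rw [← hwy]; exact hst.2⟩⟩
      · exact ih (Or.inl hw')
    · obtain ⟨e₂, x, y, hxy, hwx, hwy⟩ := adj_cases hst.1
      rw [heq] at hwx
      by_cases hxa : x = a (levelE e₂)
      · rw [hxa, embed_a] at hwx; exact absurd hwx (by simp)
      · by_cases hxb : x = b (levelE e₂)
        · rw [hxb, embed_b hab] at hwx; exact absurd hwx (by simp)
        · rw [embed_nab hxa hxb] at hwx
          obtain ⟨he, hv⟩ := Sigma.mk.inj_iff.mp (Sum.inr.inj hwx.symm)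
          subst he
          replace hv := eq_of_heq hv
          obtain rfl : x = x₀ := congrArg Subtype.val hv
          by_cases hya : y = a (levelE e₂)
          · refine ih (Or.inl ?_)
            rw [hwy, hya, embed_a]
            intro hmem
            exact ((inl_parent_below).mp hmem).2 rfl
          · by_cases hyb : y = b (levelE e₂)
            · subst hyb
              exact ⟨xiLoc_a hA, hBC.2.tail ⟨hxy,
                show ξ (embedV D a b e₂ _) = true by rw [← hwy]; exact hst.2⟩⟩
            · refine ih (Or.inr ⟨y, hya, hyb, by rw [hwy, embed_nab hya hyb], ?_⟩)
              exact ⟨xiLoc_a hA, hBC.2.tail ⟨hxy,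
                show ξ (embedV D a b e₂ y) = true by rw [← hwy]; exact hst.2⟩⟩

end Copy

section Tree

/-- The set of tree vertices weakly below the far endpoint of the edge `e`. -/
def BelowT (e : E3) : Set V3 := {v | ∃ e', desc e e' ∧ v = some e'}

lemma none_not_belowT (e : E3) : none ∉ BelowT e := by
  rintro ⟨e', -, h⟩; cases h

lemma some_belowT (e : E3) : some e ∈ BelowT e := ⟨e, desc_refl e, rfl⟩

lemma desc_of_nil {e e₂ : E3} (hd : desc e e₂) (h0 : e₂.2 = []) : e = e₂ := by
  obtain ⟨h1, h2⟩ := hd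
  rw [h0] at h2
  exact Prod.ext h1.symm ((List.prefix_nil.mp h2).trans h0.symm)

lemma tree_cross {e : E3} {u w : V3} (h : T3Adj u w) (hu : u ∉ BelowT e)
    (hw : w ∈ BelowT e) : u = parentV e ∧ w = some e := by
  obtain ⟨e₂, ⟨hu2, hw2⟩ | ⟨hw2, hu2⟩⟩ := h
  · obtain ⟨e', hd, he'⟩ := hw
    obtain rfl : e₂ = e' := by rw [hw2] at he'; exact Option.some.inj he'
    rcases eq_or_ne e e₂ with rfl | hne
    · exact ⟨hu2, hw2⟩
    · exfalso; apply hu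
      have hnil : e₂.2 ≠ [] := fun h0 => hne (desc_of_nil hd h0)
      rw [hu2, parentV_of_ne_nil hnil]
      exact ⟨(e₂.1, e₂.2.dropLast), (desc_parent_iff hnil).mpr ⟨hd, hne⟩, rfl⟩
  · exfalso; apply hu
    obtain ⟨e', hd, he'⟩ := hw
    rw [hw2] at he'
    have hnil : e₂.2 ≠ [] := by
      intro h0; rw [parentV_of_nil h0] at he'; cases he'
    rw [parentV_of_ne_nil hnil] at he'
    obtain rfl : e' = (e₂.1, e₂.2.dropLast) := (Option.some.inj he').symm
    exact ⟨e₂, ⟨hd.1, hd.2.trans (List.dropLast_prefix _)⟩, hu2⟩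

end Tree

/-- Coupling identity: for every vertex `v ≠ ρ` of `T₃`, the copies of `ρ` and `v` in
`Γ_D` lie in the same black cluster of `ξ` if and only if `ρ` and `v` lie in the same
black cluster of the tree configuration `X`. -/
theorem treelike_black_connection_iff
    (D : ℕ → Multigraph) (a b : ∀ n, (D n).V) (hab : ∀ n, a n ≠ b n)
    (hconn : ∀ n, ∀ x y : (D n).V, Relation.ReflTransGen ((D n).Adj) x y)
    (η : (GammaD D a b).E → Bool) (ξ : (GammaD D a b).V → Bool)
    (hξ : ∀ x y : (GammaD D a b).V, (GammaD D a b).OpenConn η x y → ξ x = ξ y) :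
    ∀ e : E3,
      (GammaD D a b).BlackConn ξ (Sum.inl none) (Sum.inl (some e)) ↔
        (treeSiteBlack D a b η ξ none ∧
          Relation.ReflTransGen
            (fun u w => T3Adj u w ∧ treeSiteBlack D a b η ξ w) none (some e)) := by
  suffices H : ∀ N : ℕ, ∀ e : E3, e.2.length < N →
      ((GammaD D a b).BlackConn ξ (Sum.inl none) (Sum.inl (some e)) ↔
        (treeSiteBlack D a b η ξ none ∧
          Relation.ReflTransGen
            (fun u w => T3Adj u w ∧ treeSiteBlack D a b η ξ w) none (some e))) by
    intro e; exact H (e.2.length + 1) e (Nat.lt_succ_self _)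
  intro N
  induction N with
  | zero => intro e he; omega
  | succ N ih =>
    intro e _he
    constructor
    · rintro ⟨hroot, hwalk⟩
      obtain ⟨u, w, hu, hw, walk1, hst, walk2⟩ :=
        aux_firstEntry (S := BelowV D a b e) hwalk (root_not_below e)
          (inl_some_below.mpr (desc_refl e))
      obtain ⟨e₂, x, y, hxy, hux, hwy⟩ := adj_cases hst.1
      rw [hwy] at hw
      rw [hux] at hu
      have hdesc : desc e e₂ := by
        rcases (embed_mem_below hab).mp hw with ⟨-, hd, -⟩ | ⟨-, hd⟩ <;> exact hd
      have hxa : x = a (levelE e₂) := by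
        by_contra hne
        exact hu ((embed_mem_below hab).mpr (Or.inr ⟨hne, hdesc⟩))
      have hee : e = e₂ := by
        by_contra hne
        exact hu ((embed_mem_below hab).mpr (Or.inl ⟨hxa, hdesc, hne⟩))
      subst hee
      subst hxa
      have hu_eq : u = Sum.inl (parentV e) := by rw [hux, embed_a]
      have hA : ξ (Sum.inl (parentV e)) = true := by
        rw [← hu_eq]; exact aux_lastTrue walk1 hroot
      have hya : y ≠ a (levelE e) := by
        rintro rfl
        rcases (embed_mem_below hab).mp hw with ⟨-, -, hne⟩ | ⟨hna, -⟩
        · exact hne rfl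
        · exact hna rfl
      have Goal : (D (levelE e)).BlackConn (xiLoc ξ e) (a (levelE e)) (b (levelE e)) := by
        by_cases hyb : y = b (levelE e)
        · subst hyb
          exact ⟨xiLoc_a hA, .single ⟨hxy,
            show ξ (embedV D a b e _) = true by rw [← hwy]; exact hst.2⟩⟩
        · refine claimL hab hA w walk2 (Or.inr ⟨y, hya, hyb, ?_, ?_⟩)
          · rw [hwy, embed_nab hya hyb]
          · exact ⟨xiLoc_a hA, .single ⟨hxy,
              show ξ (embedV D a b e y) = true by rw [← hwy]; exact hst.2⟩⟩
      have hX : treeSiteBlack D a b η ξ (some e) := black_to_piv Goal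
      refine ⟨by simp only [treeSiteBlack]; exact hroot, ?_⟩
      rcases eq_or_ne e.2 [] with hnil | hnil
      · exact Relation.ReflTransGen.single
          ⟨⟨e, Or.inl ⟨(parentV_of_nil hnil).symm, rfl⟩⟩, hX⟩
      · have hlen : (e.1, e.2.dropLast).2.length < N := by
          have := List.length_pos_iff.mpr hnil
          simp only [List.length_dropLast]
          omega
        have hu_eq' : u = Sum.inl (some (e.1, e.2.dropLast)) := by
          rw [hu_eq, parentV_of_ne_nil hnil]
        have hBCp : (GammaD D a b).BlackConn ξ (Sum.inl none)
            (Sum.inl (some (e.1, e.2.dropLast))) := ⟨hroot, hu_eq' ▸ walk1⟩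
        refine ((ih _ hlen).mp hBCp).2.tail ⟨⟨e, Or.inl ⟨?_, rfl⟩⟩, hX⟩
        rw [parentV_of_ne_nil hnil]
    · rintro ⟨hroot, tw⟩
      simp only [treeSiteBlack] at hroot
      obtain ⟨u, w, hu, hw, walk1, hst, -⟩ :=
        aux_firstEntry (S := BelowT e) tw (none_not_belowT e) (some_belowT e)
      obtain ⟨hu_eq, hw_eq⟩ := tree_cross hst.1 hu hw
      subst hw_eq
      have hX : treeSiteBlack D a b η ξ (some e) := hst.2
      have hBCA : (GammaD D a b).BlackConn ξ (Sum.inl none) (Sum.inl (parentV e)) := by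
        rcases eq_or_ne e.2 [] with hnil | hnil
        · rw [parentV_of_nil hnil]; exact ⟨hroot, .refl⟩
        · have hlen : (e.1, e.2.dropLast).2.length < N := by
            have := List.length_pos_iff.mpr hnil
            simp only [List.length_dropLast]
            omega
          rw [parentV_of_ne_nil hnil]
          refine (ih _ hlen).mpr ⟨by simp only [treeSiteBlack]; exact hroot, ?_⟩
          rw [hu_eq, parentV_of_ne_nil hnil] at walk1
          exact walk1
      have hA : ξ (Sum.inl (parentV e)) = true := aux_lastTrue hBCA.2 hroot
      have hloc := piv_to_black hξ hA hX
      have hglob := local_black_global (ξ := ξ) hloc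
      rw [embed_a, embed_b hab] at hglob
      exact hBCA.trans' hglob
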